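/- arXiv:1508.02640 — 5 statements merged into one kernel-verified Lean document; each statement's English description precedes it below -/
import Mathlib

section
/- Let b > 0 and σ ∈ ℝ, let Q : ℝ → ℝ be continuously differentiable with Q(τ) > 0 for all τ ∈ [−b,b], and let R : ℝ → ℝ be continuous. Define the momentum profile φ : ℝ → ℝ by φ(τ) := (1/Q(τ)) · (2(τ+b)·Q(−b) − 2·∫_{−b}^{τ} (σ − R(x))·(τ−x)·Q(x) dx). Then φ(−b) = 0, φ is differentiable at −b with φ′(−b) = 2, and for every τ ∈ [−b,b] one has R(τ) − (1/(2·Q(τ)))·(φ·Q)″(τ) = σ, where (φ·Q)″ denotes the second derivative of the product φ·Q. -/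
open intervalIntegral

/-- The momentum profile
`φ(τ) = (1/Q(τ)) · (2(τ+b)·Q(−b) − 2∫_{−b}^{τ} (σ − R(x))(τ−x)Q(x) dx)`. -/
noncomputable def momentumProfile (b σ : ℝ) (Q R : ℝ → ℝ) : ℝ → ℝ := fun τ =>
  (1 / Q τ) * (2 * (τ + b) * Q (-b) - 2 * ∫ x in (-b)..τ, (σ - R x) * (τ - x) * Q x)

/-- The momentum profile satisfies `φ(−b) = 0`, `φ′(−b) = 2`, and solves
the cscK equation `R(τ) − (φQ)″(τ)/(2Q(τ)) = σ` on `[−b,b]`. -/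
theorem momentumProfile_solves_cscK (b σ : ℝ) (hb : 0 < b) (Q R : ℝ → ℝ)
    (hQ : ContDiff ℝ 1 Q) (hR : Continuous R)
    (hQpos : ∀ τ ∈ Set.Icc (-b) b, 0 < Q τ) :
    momentumProfile b σ Q R (-b) = 0 ∧
    HasDerivAt (momentumProfile b σ Q R) 2 (-b) ∧
    (∀ τ ∈ Set.Icc (-b) b,
      R τ - (1 / (2 * Q τ)) *
        deriv (deriv (fun t => momentumProfile b σ Q R t * Q t)) τ = σ) := by
  set g : ℝ → ℝ := fun x => (σ - R x) * Q x with hg_def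
  have hg : Continuous g := (continuous_const.sub hR).mul hQ.continuous
  have hxg : Continuous fun x => x * g x := continuous_id.mul hg
  set G : ℝ → ℝ := fun τ => ∫ x in (-b)..τ, g x with hG_def
  set H : ℝ → ℝ := fun τ => ∫ x in (-b)..τ, x * g x with hH_def
  set F : ℝ → ℝ := fun τ => 2 * (τ + b) * Q (-b) - 2 * (τ * G τ - H τ) with hF_def
  have hint : ∀ τ : ℝ, (∫ x in (-b)..τ, (σ - R x) * (τ - x) * Q x) = τ * G τ - H τ := by
    intro τ
    have h1 : (∫ x in (-b)..τ, (σ - R x) * (τ - x) * Q x)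
        = ∫ x in (-b)..τ, (τ * g x - x * g x) := by
      apply intervalIntegral.integral_congr
      intro x _
      simp only [hg_def]; ring
    rw [h1, intervalIntegral.integral_sub ((hg.intervalIntegrable _ _).const_mul τ)
      (hxg.intervalIntegrable _ _), intervalIntegral.integral_const_mul]
  have hmom : momentumProfile b σ Q R = fun τ => (1 / Q τ) * F τ := by
    funext τ
    simp only [momentumProfile, hF_def, hint τ]
  have hGd : ∀ τ : ℝ, HasDerivAt G (g τ) τ := fun τ =>
    intervalIntegral.integral_hasDerivAt_right (hg.intervalIntegrable _ _)
      (hg.stronglyMeasurableAtFilter _ _) hg.continuousAt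
  have hHd : ∀ τ : ℝ, HasDerivAt H (τ * g τ) τ := fun τ =>
    intervalIntegral.integral_hasDerivAt_right (hxg.intervalIntegrable _ _)
      (hxg.stronglyMeasurableAtFilter _ _) hxg.continuousAt
  have hFd : ∀ τ : ℝ, HasDerivAt F (2 * Q (-b) - 2 * G τ) τ := by
    intro τ
    have h1 : HasDerivAt (fun τ : ℝ => 2 * (τ + b) * Q (-b)) (2 * Q (-b)) τ := by
      have := ((hasDerivAt_id τ).add_const b).const_mul 2 |>.mul_const (Q (-b))
      simpa using this
    have h2 : HasDerivAt (fun τ => τ * G τ - H τ) (G τ) τ := by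
      have := ((hasDerivAt_id τ).mul (hGd τ)).sub (hHd τ)
      exact this.congr_deriv (by simp)
    exact h1.sub (h2.const_mul 2)
  have hQb : Q (-b) ≠ 0 := (hQpos (-b) ⟨le_refl _, by linarith⟩).ne'
  refine ⟨?_, ?_, ?_⟩
  · simp [momentumProfile]
  · have hQd : HasDerivAt Q (deriv Q (-b)) (-b) :=
      (hQ.differentiable one_ne_zero (-b)).hasDerivAt
    have hinv : HasDerivAt (fun τ => 1 / Q τ) (-(deriv Q (-b)) / Q (-b) ^ 2) (-b) := by
      have h : HasDerivAt (fun τ => (Q τ)⁻¹) (-(deriv Q (-b)) / Q (-b) ^ 2) (-b) := hQd.inv hQb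
      simpa only [one_div] using h
    have hF0 : F (-b) = 0 := by
      simp [hF_def, hG_def, hH_def]
    have this : HasDerivAt (fun τ => 1 / Q τ * F τ) _ (-b) := hinv.mul (hFd (-b))
    rw [hmom]
    convert this using 1
    rw [hF0]
    simp [hG_def]
    field_simp
  · intro τ hτ
    -- open set where Q ≠ 0
    have hU : IsOpen {x : ℝ | Q x ≠ 0} := isOpen_ne_fun hQ.continuous continuous_const
    have hτU : Q τ ≠ 0 := (hQpos τ hτ).ne'
    have heq : (fun t => momentumProfile b σ Q R t * Q t) =ᶠ[nhds τ] F := by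
      filter_upwards [hU.mem_nhds hτU] with x hx
      rw [hmom]
      field_simp
    have hd1 : deriv (fun t => momentumProfile b σ Q R t * Q t) =ᶠ[nhds τ] deriv F :=
      heq.deriv
    have hderivF : deriv F = fun τ => 2 * Q (-b) - 2 * G τ := funext fun τ => (hFd τ).deriv
    have hd2 : deriv (deriv (fun t => momentumProfile b σ Q R t * Q t)) τ = deriv (deriv F) τ :=
      hd1.deriv_eq
    have hFd2 : HasDerivAt (deriv F) (-2 * g τ) τ := by
      rw [hderivF]
      have := (hGd τ).const_mul 2
      exact ((hasDerivAt_const τ (2 * Q (-b))).sub this).congr_deriv (by ring)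
    rw [hd2, hFd2.deriv]
    simp only [hg_def]
    field_simp
    ring
end

section
/- Let b > 0, let Q : ℝ → ℝ be continuously differentiable with Q(τ) > 0 for all τ ∈ [−b,b], let R : ℝ → ℝ be continuous, and let σ be the unique real number satisfying 2b·Q(−b) = ∫_{−b}^{b} (σ − R(x))·(b−x)·Q(x) dx. Set A := ∫_{−b}^{b} Q(x) dx and B := ∫_{−b}^{b} x·Q(x) dx, and let φ be the momentum profile φ(τ) := (1/Q(τ)) · (2(τ+b)·Q(−b) − 2·∫_{−b}^{τ} (σ − R(x))·(τ−x)·Q(x) dx). Then Q(b)·(bA − B) > 0, φ is differentiable at b, and −φ′(b)/2 = (Q(−b)·(bA + B) − A·∫_{−b}^{b} x·R(x)·Q(x) dx + B·∫_{−b}^{b} R(x)·Q(x) dx) / (Q(b)·(bA − B)). -/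
open intervalIntegral

/-- Formula for the cone angle parameter `β = −φ′(b)/2` of the
momentum-constructed conically singular cscK metric (equation (formcangle)). -/
theorem momentumProfile_cone_angle_formula (b : ℝ) (hb : 0 < b) (Q R : ℝ → ℝ)
    (hQ : ContDiff ℝ 1 Q) (hR : Continuous R)
    (hQpos : ∀ τ ∈ Set.Icc (-b) b, 0 < Q τ) (σ : ℝ)
    (hσ : 2 * b * Q (-b) = ∫ x in (-b)..b, (σ - R x) * (b - x) * Q x) :
    0 < Q b * (b * (∫ x in (-b)..b, Q x) - ∫ x in (-b)..b, x * Q x) ∧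
    DifferentiableAt ℝ (momentumProfile b σ Q R) b ∧
    -(deriv (momentumProfile b σ Q R) b) / 2 =
      (Q (-b) * (b * (∫ x in (-b)..b, Q x) + ∫ x in (-b)..b, x * Q x)
        - (∫ x in (-b)..b, Q x) * (∫ x in (-b)..b, x * R x * Q x)
        + (∫ x in (-b)..b, x * Q x) * (∫ x in (-b)..b, R x * Q x)) /
      (Q b * (b * (∫ x in (-b)..b, Q x) - ∫ x in (-b)..b, x * Q x)) := by
  have hQc : Continuous Q := hQ.continuous
  have hQb : 0 < Q b := hQpos b ⟨by linarith, le_rfl⟩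
  have hgc : Continuous fun x : ℝ => (σ - R x) * Q x := (continuous_const.sub hR).mul hQc
  have hhc : Continuous fun x : ℝ => (σ - R x) * x * Q x :=
    (((continuous_const.sub hR).mul continuous_id).mul hQc)
  set G : ℝ → ℝ := fun τ => ∫ x in (-b)..τ, (σ - R x) * Q x with hGdef
  set H : ℝ → ℝ := fun τ => ∫ x in (-b)..τ, (σ - R x) * x * Q x with hHdef
  set A := ∫ x in (-b)..b, Q x with hA
  set B := ∫ x in (-b)..b, x * Q x with hB
  set I1 := ∫ x in (-b)..b, R x * Q x with hI1
  set I2 := ∫ x in (-b)..b, x * R x * Q x with hI2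
  -- rewrite the inner integral
  have key : ∀ τ : ℝ, (∫ x in (-b)..τ, (σ - R x) * (τ - x) * Q x) = τ * G τ - H τ := by
    intro τ
    have h1 : ∀ x : ℝ, (σ - R x) * (τ - x) * Q x
        = τ * ((σ - R x) * Q x) - (σ - R x) * x * Q x := fun x => by ring
    simp_rw [h1]
    rw [intervalIntegral.integral_sub (Continuous.intervalIntegrable (by fun_prop) _ _)
      (Continuous.intervalIntegrable (by fun_prop) _ _), intervalIntegral.integral_const_mul]
  -- positivity of D = b*A - B
  have hDexpand : b * A - B = ∫ x in (-b)..b, (b - x) * Q x := by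
    rw [hA, hB]
    have h1 : ∀ x : ℝ, (b - x) * Q x = b * Q x - x * Q x := fun x => by ring
    simp_rw [h1]
    rw [intervalIntegral.integral_sub (Continuous.intervalIntegrable (by fun_prop) _ _)
      (Continuous.intervalIntegrable (by fun_prop) _ _), intervalIntegral.integral_const_mul]
  have hDpos : 0 < b * A - B := by
    rw [hDexpand]
    apply intervalIntegral.intervalIntegral_pos_of_pos_on
      (Continuous.intervalIntegrable (by fun_prop) _ _)
    · intro x hx
      exact mul_pos (by linarith [hx.2]) (hQpos x ⟨le_of_lt hx.1, le_of_lt hx.2⟩)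
    · linarith
  refine ⟨mul_pos hQb hDpos, ?_⟩
  -- function equality
  have hφeq : momentumProfile b σ Q R
      = fun τ => (Q τ)⁻¹ * (2 * (τ + b) * Q (-b) - 2 * (τ * G τ - H τ)) := by
    funext τ
    unfold momentumProfile
    rw [key τ, one_div]
  -- derivatives
  have hGd : HasDerivAt G ((σ - R b) * Q b) b :=
    intervalIntegral.integral_hasDerivAt_right (hgc.intervalIntegrable _ _)
      (hgc.stronglyMeasurable.stronglyMeasurableAtFilter) hgc.continuousAt
  have hHd : HasDerivAt H ((σ - R b) * b * Q b) b :=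
    intervalIntegral.integral_hasDerivAt_right (hhc.intervalIntegrable _ _)
      (hhc.stronglyMeasurable.stronglyMeasurableAtFilter) hhc.continuousAt
  have hQd : HasDerivAt Q (deriv Q b) b := (hQ.differentiable one_ne_zero b).hasDerivAt
  have hud : HasDerivAt (fun τ => (Q τ)⁻¹) (-(deriv Q b) / Q b ^ 2) b :=
    hQd.inv (ne_of_gt hQb)
  have hvd : HasDerivAt (fun τ => 2 * (τ + b) * Q (-b) - 2 * (τ * G τ - H τ))
      (2 * Q (-b) - 2 * G b) b := by
    have h1 : HasDerivAt (fun τ : ℝ => 2 * (τ + b) * Q (-b)) (2 * 1 * Q (-b)) b :=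
      (((hasDerivAt_id b).add_const b).const_mul 2).mul_const (Q (-b))
    have h2 : HasDerivAt (fun τ => 2 * (τ * G τ - H τ))
        (2 * ((1 * G b + b * ((σ - R b) * Q b)) - (σ - R b) * b * Q b)) b :=
      (((hasDerivAt_id b).mul hGd).sub hHd).const_mul 2
    have := h1.sub h2
    refine this.congr_deriv ?_
    ring
  have hvb : (2 * (b + b) * Q (-b) - 2 * (b * G b - H b)) = 0 := by
    have := key b
    rw [← hσ] at this
    -- this : 2*b*Q(-b) = b*G b - H b ... careful direction
    linarith [this]
  have hφd : HasDerivAt (momentumProfile b σ Q R) ((Q b)⁻¹ * (2 * Q (-b) - 2 * G b)) b := by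
    rw [hφeq]
    have := hud.mul hvd
    rw [show (2 * (b + b) * Q (-b) - 2 * (b * G b - H b)) = 0 from hvb] at this
    refine this.congr_deriv ?_
    ring
  refine ⟨hφd.differentiableAt, ?_⟩
  rw [hφd.deriv]
  -- expand G b
  have hGb : G b = σ * A - I1 := by
    rw [hGdef, hA, hI1]
    have h1 : ∀ x : ℝ, (σ - R x) * Q x = σ * Q x - R x * Q x := fun x => by ring
    simp_rw [h1]
    rw [intervalIntegral.integral_sub (Continuous.intervalIntegrable (by fun_prop) _ _)
      (Continuous.intervalIntegrable (by fun_prop) _ _), intervalIntegral.integral_const_mul]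
  -- expand hσ
  have hσ' : σ * b * A - σ * B - b * I1 + I2 = 2 * b * Q (-b) := by
    rw [hA, hB, hI1, hI2, hσ]
    have h1 : ∀ x : ℝ, (σ - R x) * (b - x) * Q x
        = σ * b * Q x - σ * (x * Q x) - b * (R x * Q x) + x * R x * Q x := fun x => by ring
    simp_rw [h1]
    rw [intervalIntegral.integral_add ((Continuous.intervalIntegrable (by fun_prop) _ _ :
          IntervalIntegrable (fun x => σ * b * Q x - σ * (x * Q x)) _ _ _).sub
        (Continuous.intervalIntegrable (by fun_prop) _ _))
        (Continuous.intervalIntegrable (by fun_prop) _ _),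
      intervalIntegral.integral_sub ((Continuous.intervalIntegrable (by fun_prop) _ _ :
          IntervalIntegrable (fun x => σ * b * Q x) _ _ _).sub
        (Continuous.intervalIntegrable (by fun_prop) _ _))
        (Continuous.intervalIntegrable (by fun_prop) _ _),
      intervalIntegral.integral_sub (Continuous.intervalIntegrable (by fun_prop) _ _)
        (Continuous.intervalIntegrable (by fun_prop) _ _),
      intervalIntegral.integral_const_mul, intervalIntegral.integral_const_mul,
      intervalIntegral.integral_const_mul]

  rw [hGb]
  have step : -((Q b)⁻¹ * (2 * Q (-b) - 2 * (σ * A - I1))) / 2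
      = (σ * A - I1 - Q (-b)) / Q b := by
    field_simp
    ring
  rw [step, div_eq_div_iff (ne_of_gt hQb) (ne_of_gt (mul_pos hQb hDpos))]
  linear_combination (Q b * A) * hσ'
end

section
/- Let b > 0, let Q : ℝ → ℝ be continuously differentiable with Q(τ) > 0 for all τ ∈ [−b,b], and let R : ℝ → ℝ be continuous. Set A := ∫_{−b}^{b} Q(x) dx, B := ∫_{−b}^{b} x·Q(x) dx and C := ∫_{−b}^{b} x²·Q(x) dx, and let (σ₀, λ) be the unique pair of real numbers solving the linear system A·σ₀ + B·λ = Q(−b) + Q(b) + ∫_{−b}^{b} R(x)·Q(x) dx and B·σ₀ + C·λ = −b·Q(−b) + b·Q(b) + ∫_{−b}^{b} x·R(x)·Q(x) dx (this pair exists and is unique because A·C − B² > 0). Let σ be the unique real number satisfying 2b·Q(−b) = ∫_{−b}^{b} (σ − R(x))·(b−x)·Q(x) dx, and let φ be the momentum profile φ(τ) := (1/Q(τ)) · (2(τ+b)·Q(−b) − 2·∫_{−b}^{τ} (σ − R(x))·(τ−x)·Q(x) dx). Then −φ′(b)/2 = 1 − λ·(A·C − B²)/(Q(b)·(b·A − B)).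 -/
open intervalIntegral

/-- The cone angle `β = −φ′(b)/2` of the momentum-constructed conically
singular cscK metric equals `1 − λ(AC−B²)/(Q(b)(bA−B))`, the unique angle at which the log
Futaki invariant of the fibrewise `ℂ*`-action vanishes; here `(σ₀, λ)` solve the extremal
linear system and `σ` is the cscK value determined by `φ(b)=0`. -/
theorem cone_angle_eq_log_futaki_zero (b : ℝ) (hb : 0 < b) (Q R : ℝ → ℝ)
    (hQ : ContDiff ℝ 1 Q) (hR : Continuous R)
    (hQpos : ∀ τ ∈ Set.Icc (-b) b, 0 < Q τ) (σ₀ lam σ : ℝ)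
    (hsys1 : (∫ x in (-b)..b, Q x) * σ₀ + (∫ x in (-b)..b, x * Q x) * lam
        = Q (-b) + Q b + ∫ x in (-b)..b, R x * Q x)
    (hsys2 : (∫ x in (-b)..b, x * Q x) * σ₀ + (∫ x in (-b)..b, x ^ 2 * Q x) * lam
        = -b * Q (-b) + b * Q b + ∫ x in (-b)..b, x * R x * Q x)
    (hσ : 2 * b * Q (-b) = ∫ x in (-b)..b, (σ - R x) * (b - x) * Q x) :
    -(deriv (momentumProfile b σ Q R) b) / 2
      = 1 - lam * ((∫ x in (-b)..b, Q x) * (∫ x in (-b)..b, x ^ 2 * Q x)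
              - (∫ x in (-b)..b, x * Q x) ^ 2)
          / (Q b * (b * (∫ x in (-b)..b, Q x) - ∫ x in (-b)..b, x * Q x)) := by
  have hQc : Continuous Q := hQ.continuous
  set f1 : ℝ → ℝ := fun x => (σ - R x) * Q x with hf1
  set f2 : ℝ → ℝ := fun x => (σ - R x) * x * Q x with hf2
  have hf1c : Continuous f1 := ((continuous_const.sub hR).mul hQc)
  have hf2c : Continuous f2 := ((continuous_const.sub hR).mul continuous_id).mul hQc
  set G : ℝ → ℝ := fun u => ∫ x in (-b)..u, f1 x with hG
  set H : ℝ → ℝ := fun u => ∫ x in (-b)..u, f2 x with hH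
  -- rewrite the inner integral
  have key : ∀ τ : ℝ, (∫ x in (-b)..τ, (σ - R x) * (τ - x) * Q x) = τ * G τ - H τ := by
    intro τ
    have h1 : (∫ x in (-b)..τ, (σ - R x) * (τ - x) * Q x)
        = ∫ x in (-b)..τ, (τ * f1 x - f2 x) := by
      congr 1; ext x; simp only [hf1, hf2]; ring
    rw [h1, intervalIntegral.integral_sub (f := fun x => τ * f1 x) (g := f2) ((continuous_const.mul hf1c).intervalIntegrable _ _)
      (hf2c.intervalIntegrable _ _), intervalIntegral.integral_const_mul]
  have hGd : HasDerivAt G (f1 b) b :=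
    intervalIntegral.integral_hasDerivAt_right (hf1c.intervalIntegrable _ _)
      (hf1c.stronglyMeasurableAtFilter _ _) hf1c.continuousAt
  have hHd : HasDerivAt H (f2 b) b :=
    intervalIntegral.integral_hasDerivAt_right (hf2c.intervalIntegrable _ _)
      (hf2c.stronglyMeasurableAtFilter _ _) hf2c.continuousAt
  have hQb : (0:ℝ) < Q b := hQpos b ⟨by linarith, le_refl b⟩
  have hQbne : Q b ≠ 0 := ne_of_gt hQb
  have hQd : HasDerivAt Q (deriv Q b) b :=
    ((hQ.differentiable one_ne_zero) b).hasDerivAt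
  -- derivative of the profile
  have hgd : HasDerivAt (fun τ => 2 * (τ + b) * Q (-b)
      - 2 * ∫ x in (-b)..τ, (σ - R x) * (τ - x) * Q x)
      (2 * Q (-b) - 2 * (G b + (b * f1 b - f2 b))) b := by
    have h2 : HasDerivAt (fun τ : ℝ => τ * G τ - H τ) (G b + b * f1 b - f2 b) b := by
      have := ((hasDerivAt_id b).mul hGd).sub hHd
      exact this.congr_deriv (by simp)
    have h3 : HasDerivAt (fun τ : ℝ => 2 * (τ + b) * Q (-b)) (2 * Q (-b)) b := by
      have : HasDerivAt (fun τ : ℝ => 2 * (τ + b) * Q (-b)) (2 * 1 * Q (-b)) b := by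
        exact (((hasDerivAt_id b).add_const b).const_mul 2).mul_const (Q (-b))
      simpa using this
    have h4 : HasDerivAt (fun τ : ℝ => 2 * (τ + b) * Q (-b) - 2 * (τ * G τ - H τ))
        (2 * Q (-b) - 2 * (G b + b * f1 b - f2 b)) b := h3.sub (h2.const_mul 2)
    have heq : (fun τ : ℝ => 2 * (τ + b) * Q (-b) - 2 * (τ * G τ - H τ))
        = fun τ => 2 * (τ + b) * Q (-b) - 2 * ∫ x in (-b)..τ, (σ - R x) * (τ - x) * Q x := by
      funext τ; rw [key τ]
    rw [heq] at h4
    convert h4 using 1; ring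
  have hinv : HasDerivAt (fun τ => 1 / Q τ) (-(deriv Q b) / Q b ^ 2) b := by
    have h : HasDerivAt (fun τ => (Q τ)⁻¹) (-(deriv Q b) / Q b ^ 2) b := hQd.inv hQbne
    simpa [one_div] using h
  have hgb0 : (2 * (b + b) * Q (-b)
      - 2 * ∫ x in (-b)..b, (σ - R x) * (b - x) * Q x) = 0 := by
    rw [← hσ]; ring
  have hφ : HasDerivAt (momentumProfile b σ Q R)
      ((1 / Q b) * (2 * Q (-b) - 2 * (G b + (b * f1 b - f2 b)))) b := by
    have := hinv.mul hgd
    have h0 : (-(deriv Q b) / Q b ^ 2) * (2 * (b + b) * Q (-b)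
        - 2 * ∫ x in (-b)..b, (σ - R x) * (b - x) * Q x)
        + (1 / Q b) * (2 * Q (-b) - 2 * (G b + (b * f1 b - f2 b)))
        = (1 / Q b) * (2 * Q (-b) - 2 * (G b + (b * f1 b - f2 b))) := by
      rw [hgb0]; ring
    rw [h0] at this
    exact this
  have hderiv : deriv (momentumProfile b σ Q R) b
      = (1 / Q b) * (2 * Q (-b) - 2 * (G b + (b * f1 b - f2 b))) := hφ.deriv
  have hcancel : b * f1 b - f2 b = 0 := by simp [hf1, hf2]; ring
  -- express G b, H b via the named integrals
  set IA := ∫ x in (-b)..b, Q x with hIA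
  set IB := ∫ x in (-b)..b, x * Q x with hIB
  set IC := ∫ x in (-b)..b, x ^ 2 * Q x with hIC
  set IR := ∫ x in (-b)..b, R x * Q x with hIR
  set IXR := ∫ x in (-b)..b, x * R x * Q x with hIXR
  have hGb : G b = σ * IA - IR := by
    show (∫ x in (-b)..b, f1 x) = σ * IA - IR
    have h1 : (∫ x in (-b)..b, f1 x) = ∫ x in (-b)..b, (σ * Q x - R x * Q x) := by
      congr 1; ext x; simp only [hf1]; ring
    rw [h1, intervalIntegral.integral_sub (f := fun x => σ * Q x) (g := fun x => R x * Q x) ((continuous_const.mul hQc).intervalIntegrable _ _)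
      ((hR.mul hQc).intervalIntegrable _ _), intervalIntegral.integral_const_mul, hIA, hIR]
  have hHb : H b = σ * IB - IXR := by
    show (∫ x in (-b)..b, f2 x) = σ * IB - IXR
    have h1 : (∫ x in (-b)..b, f2 x) = ∫ x in (-b)..b, (σ * (x * Q x) - x * R x * Q x) := by
      congr 1; ext x; simp only [hf2]; ring
    rw [h1, intervalIntegral.integral_sub (f := fun x => σ * (x * Q x)) (g := fun x => x * R x * Q x)
      ((continuous_const.mul (continuous_id'.mul hQc)).intervalIntegrable _ _)
      (((continuous_id'.mul hR).mul hQc).intervalIntegrable _ _),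
      intervalIntegral.integral_const_mul, hIB, hIXR]
  -- rewrite hσ
  have hσ' : 2 * b * Q (-b) = σ * (b * IA - IB) - (b * IR - IXR) := by
    rw [hσ, key b, hGb, hHb]; ring
  -- positivity of b*IA - IB
  have hpos : 0 < b * IA - IB := by
    have h1 : (∫ x in (-b)..b, (b - x) * Q x) = b * IA - IB := by
      have h2 : (∫ x in (-b)..b, (b - x) * Q x)
          = ∫ x in (-b)..b, (b * Q x - x * Q x) := by
        congr 1; ext x; ring
      rw [h2, intervalIntegral.integral_sub (f := fun x => b * Q x) (g := fun x => x * Q x) ((continuous_const.mul hQc).intervalIntegrable _ _)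
        ((continuous_id'.mul hQc).intervalIntegrable _ _),
        intervalIntegral.integral_const_mul, hIA, hIB]
    rw [← h1]
    refine intervalIntegral.intervalIntegral_pos_of_pos_on
      (((continuous_const.sub continuous_id').mul hQc).intervalIntegrable _ _) ?_ (by linarith)
    intro x hx
    exact mul_pos (by linarith [hx.2]) (hQpos x ⟨le_of_lt hx.1, le_of_lt hx.2⟩)
  have hne : b * IA - IB ≠ 0 := ne_of_gt hpos
  -- combine the linear system
  have hlam : lam * (IA * IC - IB ^ 2)
      = IA * (-b * Q (-b) + b * Q b + IXR) - IB * (Q (-b) + Q b + IR) := by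
    linear_combination IA * hsys2 - IB * hsys1
  have hmain : (σ * IA - IR - Q (-b)) * (b * IA - IB)
      = Q b * (b * IA - IB) - lam * (IA * IC - IB ^ 2) := by
    linear_combination -IA * hσ' + hlam
  rw [hderiv, hcancel, hGb]
  field_simp
  linear_combination hmain
end

section
/- Let b ∈ ℝ and β > 0, and let φ : ℝ → ℝ be real-analytic on a neighbourhood of b with φ(b) = 0 and φ′(b) = −2β. Let t₀ ∈ ℝ and suppose τ : (t₀, ∞) → ℝ is differentiable with τ(t) < b for all t > t₀, τ′(t) = φ(τ(t)) for all t > t₀, and τ(t) → b as t → ∞. Then there exists a real number L > 0 such that e^{2βt}·(b − τ(t)) → L as t → ∞. -/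
open Filter

/-- If the moment map coordinate `τ` solves `τ′ = φ(τ)` with `τ < b`,
`τ → b` at infinity, and `φ` is real-analytic at `b` with `φ(b) = 0`, `φ′(b) = −2β`,
then `b − τ(t)` decays exactly like a positive constant times `e^{−2βt}`. -/
theorem moment_map_exponential_decay (b β : ℝ) (hβ : 0 < β) (φ : ℝ → ℝ)
    (hφ : AnalyticAt ℝ φ b) (hφb : φ b = 0) (hφ' : deriv φ b = -2 * β)
    (t₀ : ℝ) (τ : ℝ → ℝ)
    (hlt : ∀ t > t₀, τ t < b)
    (hode : ∀ t > t₀, HasDerivAt τ (φ (τ t)) t)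
    (hlim : Tendsto τ atTop (nhds b)) :
    ∃ L > 0, Tendsto (fun t => Real.exp (2 * β * t) * (b - τ t)) atTop (nhds L) := by
  -- Step 1: quadratic error bound for φ near b.
  -- deriv φ is differentiable at b.
  have hdφ : DifferentiableAt ℝ (deriv φ) b := by
    have h1 : DifferentiableAt ℝ (fderiv ℝ φ) b := hφ.fderiv.differentiableAt
    have h2 : deriv φ = fun x => fderiv ℝ φ x 1 := rfl
    rw [h2]
    exact h1.clm_apply (differentiableAt_const 1)
  -- Lipschitz-type bound on deriv φ near b.
  obtain ⟨c, hc⟩ : ∃ c, ∀ᶠ x in nhds b, ‖deriv φ x - deriv φ b‖ ≤ c * ‖x - b‖ :=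
    (hdφ.hasFDerivAt.isBigO_sub).bound
  set K : ℝ := max c 1 with hKdef
  have hK1 : (1:ℝ) ≤ K := le_max_right _ _
  have hK : 0 < K := lt_of_lt_of_le one_pos hK1
  have hcK : ∀ᶠ x in nhds b, ‖deriv φ x - deriv φ b‖ ≤ K * ‖x - b‖ := by
    filter_upwards [hc] with x hx
    exact hx.trans (mul_le_mul_of_nonneg_right (le_max_left _ _) (norm_nonneg _))
  -- φ is differentiable near b.
  have hdiff : ∀ᶠ x in nhds b, DifferentiableAt ℝ φ x := by
    filter_upwards [hφ.eventually_analyticAt] with x hx using hx.differentiableAt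
  obtain ⟨δ, hδ, hball⟩ : ∃ δ > 0, ∀ x, |x - b| < δ →
      (‖deriv φ x - deriv φ b‖ ≤ K * ‖x - b‖ ∧ DifferentiableAt ℝ φ x) := by
    obtain ⟨δ, hδ, h⟩ := Metric.eventually_nhds_iff.1 (hcK.and hdiff)
    exact ⟨δ, hδ, fun x hx => h (by simpa [Real.dist_eq] using hx)⟩
  -- MVT error bound: |φ x + 2β(x − b)| ≤ K (b − x)² for b − δ < x < b.
  have herr : ∀ x, b - δ < x → x < b → |φ x + 2 * β * (x - b)| ≤ K * (b - x) ^ 2 := by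
    intro x hx1 hx2
    have hsub : ∀ y ∈ Set.Icc x b, |y - b| < δ ∨ y = b := by
      intro y hy
      rcases eq_or_lt_of_le hy.2 with h | h
      · exact Or.inr h
      · left
        rw [abs_sub_lt_iff]
        constructor <;> nlinarith [hy.1, hy.2]
    have hcont : ContinuousOn φ (Set.Icc x b) := by
      intro y hy
      rcases hsub y hy with h | h
      · exact ((hball y h).2.continuousAt).continuousWithinAt
      · subst h
        exact (hφ.differentiableAt.continuousAt).continuousWithinAt
    have hderiv : ∀ y ∈ Set.Ioo x b, HasDerivAt φ (deriv φ y) y := by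
      intro y hy
      rcases hsub y (Set.mem_Icc_of_Ioo hy) with h | h
      · exact (hball y h).2.hasDerivAt
      · subst h; exact hφ.differentiableAt.hasDerivAt
    obtain ⟨ξ, hξ, hslope⟩ := exists_hasDerivAt_eq_slope φ (deriv φ) hx2 hcont hderiv
    have hbx : 0 < b - x := by linarith
    have hφx : φ x = -(deriv φ ξ) * (b - x) := by
      rw [hφb] at hslope
      field_simp at hslope
      linarith [hslope]
    have hξδ : |ξ - b| < δ := by
      rw [abs_sub_lt_iff]; constructor <;> nlinarith [hξ.1, hξ.2]
    have hLip := (hball ξ hξδ).1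
    rw [hφ', Real.norm_eq_abs, Real.norm_eq_abs] at hLip
    have hξx : |ξ - b| ≤ b - x := by
      have h1 : ξ - b < 0 := by linarith [hξ.2]
      rw [abs_of_neg h1]; linarith [hξ.1]
    have key : φ x + 2 * β * (x - b) = -(b - x) * (deriv φ ξ - (-2 * β)) := by
      rw [hφx]; ring
    rw [key, abs_mul, abs_neg, abs_of_pos hbx]
    calc (b - x) * |deriv φ ξ - (-2 * β)| ≤ (b - x) * (K * |ξ - b|) :=
          mul_le_mul_of_nonneg_left hLip (le_of_lt hbx)
      _ ≤ (b - x) * (K * (b - x)) := by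
          apply mul_le_mul_of_nonneg_left _ (le_of_lt hbx)
          exact mul_le_mul_of_nonneg_left hξx (le_of_lt hK)
      _ = K * (b - x) ^ 2 := by ring
  -- Step 2: choose t₁ past which u = b − τ is small.
  set ε : ℝ := min δ (β / K) with hεdef
  have hε : 0 < ε := lt_min hδ (div_pos hβ hK)
  obtain ⟨t₁, ht₁⟩ : ∃ t₁, ∀ t ≥ t₁, t > t₀ ∧ |τ t - b| < ε := by
    have h1 : ∀ᶠ t in atTop, t > t₀ := eventually_gt_atTop t₀
    have h2 : ∀ᶠ t in atTop, |τ t - b| < ε := by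
      have := Metric.tendsto_nhds.1 hlim ε hε
      simpa [Real.dist_eq] using this
    exact (h1.and h2).exists_forall_of_atTop
  have ht₁0 : t₁ > t₀ := (ht₁ t₁ le_rfl).1
  -- basic facts about u on [t₁, ∞)
  have hu_pos : ∀ t ≥ t₁, 0 < b - τ t := fun t ht => sub_pos.2 (hlt t (ht₁ t ht).1)
  have hu_small : ∀ t ≥ t₁, b - τ t < ε := by
    intro t ht
    have := (ht₁ t ht).2
    rw [abs_sub_lt_iff] at this
    linarith [this.2]
  have hu_err : ∀ t ≥ t₁, |φ (τ t) + 2 * β * (τ t - b)| ≤ K * (b - τ t) ^ 2 := by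
    intro t ht
    refine herr (τ t) ?_ (hlt t (ht₁ t ht).1)
    have h1 := hu_small t ht
    have h2 : ε ≤ δ := min_le_left _ _
    linarith
  have hu_Kβ : ∀ t ≥ t₁, K * (b - τ t) ≤ β := by
    intro t ht
    have h1 := hu_small t ht
    have h2 : ε ≤ β / K := min_le_right _ _
    have : b - τ t ≤ β / K := by linarith
    calc K * (b - τ t) ≤ K * (β / K) := mul_le_mul_of_nonneg_left this (le_of_lt hK)
      _ = β := by field_simp
  -- derivative facts
  have hu_deriv : ∀ t > t₀, HasDerivAt (fun s => b - τ s) (-(φ (τ t))) t :=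
    fun t ht => (hode t ht).const_sub b
  have hlog_deriv : ∀ t ≥ t₁, HasDerivAt (fun s => Real.log (b - τ s))
      (-(φ (τ t)) / (b - τ t)) t := by
    intro t ht
    exact (hu_deriv t (ht₁ t ht).1).log (ne_of_gt (hu_pos t ht))
  -- Step 3: w = log u + β t is antitone on [t₁, ∞); gives u ≤ A e^{-βt}.
  set w : ℝ → ℝ := fun t => Real.log (b - τ t) + β * t with hwdef
  have hw_deriv : ∀ t ≥ t₁, HasDerivAt w (-(φ (τ t)) / (b - τ t) + β) t := by
    intro t ht
    exact (hlog_deriv t ht).add (by simpa using (hasDerivAt_id t).const_mul β)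
  have hw_anti : AntitoneOn w (Set.Ici t₁) := by
    apply antitoneOn_of_deriv_nonpos (convex_Ici t₁)
    · exact fun t ht => ((hw_deriv t ht).continuousAt).continuousWithinAt
    · intro t ht
      rw [interior_Ici] at ht
      exact ((hw_deriv t (le_of_lt ht)).differentiableAt).differentiableWithinAt
    · intro t ht
      rw [interior_Ici] at ht
      have ht' : t ≥ t₁ := le_of_lt ht
      rw [(hw_deriv t ht').deriv]
      set u := b - τ t with hu
      have hu0 : 0 < u := hu_pos t ht'
      have hr := hu_err t ht'
      have hKu := hu_Kβ t ht'
      set r := φ (τ t) + 2 * β * (τ t - b) with hrdef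
      have hφτ : φ (τ t) = r + 2 * β * u := by rw [hrdef, hu]; ring
      rw [hφτ]
      have : -(r + 2 * β * u) / u + β = -(r / u) - β := by field_simp; ring
      rw [this]
      have habs : |r| ≤ β * u := by
        calc |r| ≤ K * u ^ 2 := hr
          _ = (K * u) * u := by ring
          _ ≤ β * u := mul_le_mul_of_nonneg_right hKu (le_of_lt hu0)
      have : r / u ≥ -β := by
        rw [ge_iff_le, neg_le, ← neg_div, div_le_iff₀ hu0]
        calc -r ≤ |r| := neg_le_abs r
          _ ≤ β * u := habs
      linarith
  -- exponential bound: u t * exp (β t) ≤ A for t ≥ t₁.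
  set A : ℝ := (b - τ t₁) * Real.exp (β * t₁) with hAdef
  have hA0 : 0 < A := mul_pos (hu_pos t₁ le_rfl) (Real.exp_pos _)
  have hA : ∀ t ≥ t₁, (b - τ t) ≤ A * Real.exp (-(β * t)) := by
    intro t ht
    have h1 : Real.log (b - τ t) + β * t ≤ Real.log (b - τ t₁) + β * t₁ :=
      hw_anti (Set.mem_Ici.2 le_rfl) (Set.mem_Ici.2 ht) ht
    have h2 := Real.exp_le_exp.2 h1
    rw [Real.exp_add, Real.exp_add, Real.exp_log (hu_pos t ht),
      Real.exp_log (hu_pos t₁ le_rfl)] at h2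
    calc b - τ t = ((b - τ t) * Real.exp (β * t)) * Real.exp (-(β * t)) := by
          rw [mul_assoc, ← Real.exp_add]; simp
      _ ≤ ((b - τ t₁) * Real.exp (β * t₁)) * Real.exp (-(β * t)) :=
          mul_le_mul_of_nonneg_right h2 (Real.exp_pos _).le
      _ = A * Real.exp (-(β * t)) := by rw [hAdef]
  -- Step 4: f = log u + 2βt converges.
  set f : ℝ → ℝ := fun t => Real.log (b - τ t) + 2 * β * t with hfdef
  have hf_deriv : ∀ t ≥ t₁, HasDerivAt f (-(φ (τ t)) / (b - τ t) + 2 * β) t := by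
    intro t ht
    exact (hlog_deriv t ht).add (by simpa using (hasDerivAt_id t).const_mul (2 * β))
  have hf_deriv_bound : ∀ t ≥ t₁,
      |(-(φ (τ t)) / (b - τ t) + 2 * β)| ≤ K * A * Real.exp (-(β * t)) := by
    intro t ht
    set u := b - τ t with hu
    have hu0 : 0 < u := hu_pos t ht
    set r := φ (τ t) + 2 * β * (τ t - b) with hrdef
    have hφτ : φ (τ t) = r + 2 * β * u := by rw [hrdef, hu]; ring
    have hval : -(φ (τ t)) / u + 2 * β = -(r / u) := by
      rw [hφτ]; field_simp; ring
    rw [hval, abs_neg, abs_div, abs_of_pos hu0, div_le_iff₀ hu0]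
    have h1 : |r| ≤ K * u ^ 2 := hu_err t ht
    have h2 : u ≤ A * Real.exp (-(β * t)) := hA t ht
    calc |r| ≤ K * u ^ 2 := h1
      _ = (K * u) * u := by ring
      _ ≤ (K * (A * Real.exp (-(β * t)))) * u := by
          apply mul_le_mul_of_nonneg_right _ (le_of_lt hu0)
          exact mul_le_mul_of_nonneg_left h2 (le_of_lt hK)
      _ = K * A * Real.exp (-(β * t)) * u := by ring
  -- correction term
  set c₀ : ℝ := K * A / β with hc₀def
  have hc₀ : 0 < c₀ := div_pos (mul_pos hK hA0) hβ
  have hexp_deriv : ∀ t : ℝ, HasDerivAt (fun s => c₀ * Real.exp (-(β * s)))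
      (-(K * A * Real.exp (-(β * t)))) t := by
    intro t
    have h1 : HasDerivAt (fun s : ℝ => -(β * s)) (-β) t := by
      simpa using ((hasDerivAt_id t).const_mul β).fun_neg
    have h2 := (Real.hasDerivAt_exp (-(β * t))).comp t h1
    have h3 := h2.const_mul c₀
    refine h3.congr_deriv ?_
    rw [hc₀def]; field_simp
  -- h = f − c₀ e^{-βt} is monotone, g = f + c₀ e^{-βt} is antitone on [t₁,∞).
  set h : ℝ → ℝ := fun t => f t - c₀ * Real.exp (-(β * t)) with hhdef
  set g : ℝ → ℝ := fun t => f t + c₀ * Real.exp (-(β * t)) with hgdef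
  have hh_deriv : ∀ t ≥ t₁, HasDerivAt h
      ((-(φ (τ t)) / (b - τ t) + 2 * β) - -(K * A * Real.exp (-(β * t)))) t :=
    fun t ht => (hf_deriv t ht).sub (hexp_deriv t)
  have hg_deriv : ∀ t ≥ t₁, HasDerivAt g
      ((-(φ (τ t)) / (b - τ t) + 2 * β) + -(K * A * Real.exp (-(β * t)))) t :=
    fun t ht => (hf_deriv t ht).add (hexp_deriv t)
  have hh_mono : MonotoneOn h (Set.Ici t₁) := by
    apply monotoneOn_of_deriv_nonneg (convex_Ici t₁)
    · exact fun t ht => ((hh_deriv t ht).continuousAt).continuousWithinAt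
    · intro t ht
      rw [interior_Ici] at ht
      exact ((hh_deriv t (le_of_lt ht)).differentiableAt).differentiableWithinAt
    · intro t ht
      rw [interior_Ici] at ht
      have ht' : t ≥ t₁ := le_of_lt ht
      rw [(hh_deriv t ht').deriv]
      have := hf_deriv_bound t ht'
      have := abs_le.1 this
      linarith [this.1]
  have hg_anti : AntitoneOn g (Set.Ici t₁) := by
    apply antitoneOn_of_deriv_nonpos (convex_Ici t₁)
    · exact fun t ht => ((hg_deriv t ht).continuousAt).continuousWithinAt
    · intro t ht
      rw [interior_Ici] at ht
      exact ((hg_deriv t (le_of_lt ht)).differentiableAt).differentiableWithinAt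
    · intro t ht
      rw [interior_Ici] at ht
      have ht' : t ≥ t₁ := le_of_lt ht
      rw [(hg_deriv t ht').deriv]
      have := hf_deriv_bound t ht'
      have := abs_le.1 this
      linarith [this.2]
  -- h is bounded above by g t₁.
  have hhg : ∀ t ≥ t₁, h t ≤ g t₁ := by
    intro t ht
    have h1 : h t ≤ g t := by
      rw [hhdef, hgdef]
      have : 0 ≤ c₀ * Real.exp (-(β * t)) := le_of_lt (mul_pos hc₀ (Real.exp_pos _))
      simp only []
      linarith
    have h2 : g t ≤ g t₁ := hg_anti (Set.mem_Ici.2 le_rfl) (Set.mem_Ici.2 ht) ht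
    linarith
  -- H = h ∘ max · t₁ is globally monotone, bounded; hence converges.
  set H : ℝ → ℝ := fun t => h (max t t₁) with hHdef
  have hH_mono : Monotone H := by
    intro s t hst
    exact hh_mono (Set.mem_Ici.2 (le_max_right s t₁)) (Set.mem_Ici.2 (le_max_right t t₁))
      (max_le_max hst le_rfl)
  have hH_bdd : BddAbove (Set.range H) := by
    refine ⟨g t₁, ?_⟩
    rintro x ⟨t, rfl⟩
    exact hhg (max t t₁) (le_max_right t t₁)
  have hH_tendsto : Tendsto H atTop (nhds (⨆ t, H t)) := tendsto_atTop_ciSup hH_mono hH_bdd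
  set l : ℝ := ⨆ t, H t with hldef
  have hh_tendsto : Tendsto h atTop (nhds l) := by
    apply hH_tendsto.congr'
    filter_upwards [eventually_ge_atTop t₁] with t ht
    rw [hHdef]
    simp only [max_eq_left ht]
  -- exp(-βt) → 0.
  have hexp0 : Tendsto (fun t => Real.exp (-(β * t))) atTop (nhds 0) := by
    have h1 : Tendsto (fun t : ℝ => β * t) atTop atTop :=
      Tendsto.const_mul_atTop hβ tendsto_id
    exact Real.tendsto_exp_neg_atTop_nhds_zero.comp h1
  have hf_tendsto : Tendsto f atTop (nhds l) := by
    have : Tendsto (fun t => h t + c₀ * Real.exp (-(β * t))) atTop (nhds (l + c₀ * 0)) :=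
      hh_tendsto.add ((hexp0.const_mul c₀))
    simp only [mul_zero, add_zero] at this
    apply this.congr
    intro t
    rw [hhdef]; ring
  -- conclude
  refine ⟨Real.exp l, Real.exp_pos l, ?_⟩
  have hexp_f : Tendsto (fun t => Real.exp (f t)) atTop (nhds (Real.exp l)) :=
    (Real.continuous_exp.continuousAt.tendsto).comp hf_tendsto
  apply hexp_f.congr'
  filter_upwards [eventually_ge_atTop t₁] with t ht
  rw [hfdef]
  simp only []
  rw [Real.exp_add, Real.exp_log (hu_pos t ht)]
  ring
end

section
/- Let b > 0 and let Q, R : ℝ → ℝ be real-analytic on an open interval containing [−b,b], with Q(τ) > 0 for all τ ∈ [−b,b]. Then there exists exactly one pair (σ, φ) consisting of a real number σ and a function φ : ℝ → ℝ that is twice continuously differentiable on [−b,b], such that: (i) R(τ) − (1/(2·Q(τ)))·(φ·Q)″(τ) = σ for every τ ∈ [−b,b]; (ii) φ(−b) = 0 and φ′(−b) = 2; and (iii) φ(b) = 0. Moreover this φ is real-analytic on a neighbourhood of [−b,b]. -/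
open Set Filter FormalMultilinearSeries



lemma norm_coeff_le (p : FormalMultilinearSeries ℝ ℝ ℝ) (n : ℕ) : ‖p.coeff n‖ ≤ ‖p n‖ := by
  have h1 : p.coeff n = p n (fun _ => 1) := by
    have := FormalMultilinearSeries.apply_eq_pow_smul_coeff (p := p) (n := n) (z := 1)
    simp at this; simp [this]
  rw [h1]
  calc ‖p n (fun _ => 1)‖ ≤ ‖p n‖ * ∏ _i : Fin n, ‖(1:ℝ)‖ := (p n).le_opNorm _
    _ = ‖p n‖ := by simp

lemma analyticAt_of_hasDerivAt_analytic {f F : ℝ → ℝ} {x : ℝ}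
    (hf : AnalyticAt ℝ f x) (hF : ∀ᶠ t in nhds x, HasDerivAt F (f t) t) :
    AnalyticAt ℝ F x := by
  obtain ⟨p, r, hp⟩ := hf
  obtain ⟨s, hs0, hsr⟩ := ENNReal.lt_iff_exists_nnreal_btwn.mp hp.r_pos
  obtain ⟨ε, hε, hball⟩ := Metric.eventually_nhds_iff_ball.mp hF
  set ρ : ℝ := min (s : ℝ) ε with hρdef
  have hs0' : (0:ℝ) < s := by exact_mod_cast hs0
  have hρ : 0 < ρ := lt_min hs0' hε
  have hρs : ρ ≤ (s : ℝ) := min_le_left _ _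
  have hρε : ρ ≤ ε := min_le_right _ _
  set c : ℕ → ℝ := p.coeff with hc
  set d : ℕ → ℝ := fun n => Nat.rec (F x) (fun k _ => c k / (k+1)) n with hd
  have hd0 : d 0 = F x := rfl
  have hdsucc : ∀ k : ℕ, d (k+1) = c k / (k+1) := fun k => rfl
  have hcle : ∀ n, |c n| ≤ ‖p n‖ := fun n => norm_coeff_le p n
  have hsum : Summable (fun n => ‖p n‖ * (s:ℝ)^n) :=
    p.summable_norm_mul_pow (hsr.trans_le hp.r_le)
  set g : ℕ → ℝ → ℝ := fun n z => d n * (z - x)^n with hg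
  set g' : ℕ → ℝ → ℝ := fun n z => d n * (n * (z - x)^(n-1)) with hg'
  set u : ℕ → ℝ := fun n => Nat.rec 0 (fun k _ => ‖p k‖ * (s:ℝ)^k) n with hu
  have hu_sum : Summable u := by
    rw [← summable_nat_add_iff 1]
    exact hsum
  have hderiv : ∀ n : ℕ, ∀ y ∈ Metric.ball x ρ, HasDerivAt (g n) (g' n y) y := by
    intro n y _
    have h1 : HasDerivAt (fun z => (z - x)) 1 y := (hasDerivAt_id y).sub_const x
    have h2 := (h1.pow n).const_mul (d n)
    simp only [mul_one] at h2
    exact h2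
  have habs : ∀ y ∈ Metric.ball x ρ, |y - x| ≤ (s:ℝ) := by
    intro y hy
    have : dist y x < ρ := Metric.mem_ball.mp hy
    rw [Real.dist_eq] at this
    linarith
  have hg'succ : ∀ (k : ℕ) (y : ℝ), g' (k+1) y = c k * (y - x)^k := by
    intro k y
    have hk : ((k:ℝ)+1) ≠ 0 := by positivity
    simp only [hg', hdsucc, Nat.cast_add, Nat.cast_one, Nat.add_sub_cancel]
    field_simp
  have hbound : ∀ n : ℕ, ∀ y ∈ Metric.ball x ρ, ‖g' n y‖ ≤ u n := by
    intro n y hy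
    match n with
    | 0 =>
      have h0 : g' 0 y = 0 := by simp [hg']
      rw [h0]
      simp [show u 0 = 0 from rfl]
    | (k+1) =>
      rw [Real.norm_eq_abs, hg'succ k y, abs_mul, abs_pow]
      show |c k| * |y - x| ^ k ≤ ‖p k‖ * (s:ℝ)^k
      exact mul_le_mul (hcle k) (pow_le_pow_left₀ (abs_nonneg _) (habs y hy) k)
        (by positivity) (norm_nonneg _)
  have hg0 : Summable (fun n => g n x) := by
    apply summable_of_ne_finset_zero (s := {0})
    intro n hn
    simp only [Finset.mem_singleton] at hn
    simp [hg, zero_pow hn]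
  set G : ℝ → ℝ := fun z => ∑' n, g n z with hG
  have hGderiv : ∀ y ∈ Metric.ball x ρ, HasDerivAt G (f y) y := by
    intro y hy
    have key := hasDerivAt_tsum_of_isPreconnected hu_sum Metric.isOpen_ball
      (convex_ball x ρ).isPreconnected hderiv hbound
      (Metric.mem_ball_self hρ) hg0 hy
    have hfy : HasSum (fun n => (y - x)^n • c n) (f y) := by
      have hmem : y - x ∈ Metric.eball (0:ℝ) r := by
        rw [Metric.mem_eball, edist_zero_right]
        have h1 : ‖y - x‖₊ < s := by
          rw [← NNReal.coe_lt_coe]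
          have : dist y x < ρ := Metric.mem_ball.mp hy
          rw [Real.dist_eq] at this
          simp only [coe_nnnorm, Real.norm_eq_abs]
          linarith
        calc (‖y - x‖₊ : ENNReal) < (s : ENNReal) := by exact_mod_cast h1
          _ < r := hsr
      have h2 := hp.hasSum hmem
      simp only [FormalMultilinearSeries.apply_eq_pow_smul_coeff] at h2
      rwa [show x + (y - x) = y from by ring] at h2
    have hfun : (fun n : ℕ => g' (n+1) y) = fun n => (y - x)^n • c n := by
      funext n
      rw [hg'succ n y, smul_eq_mul, mul_comm]
    have hshift : HasSum (fun n : ℕ => g' (n+1) y) (f y) := hfun ▸ hfy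
    have hfull : HasSum (fun n => g' n y) (f y) := by
      have h3 := (hasSum_nat_add_iff (f := fun n => g' n y) 1).mp hshift
      have h4 : g' 0 y = 0 := by simp [hg']
      simpa [h4] using h3
    rw [hfull.tsum_eq] at key
    exact key
  have hGx : G x = F x := by
    have hz : ∀ n : ℕ, n ≠ 0 → g n x = 0 := by
      intro n hn; simp [hg, zero_pow hn]
    show (∑' n, g n x) = F x
    rw [tsum_eq_single 0 (fun n hn => hz n hn)]
    show d 0 * (x - x)^0 = F x
    simp [hd0]
  have hEq : ∀ y ∈ Metric.ball x ρ, F y = G y := by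
    have hD : ∀ y ∈ Metric.ball x ρ, HasDerivAt (fun z => F z - G z) 0 y := by
      intro y hy
      have hFy : HasDerivAt F (f y) y := hball y (lt_of_lt_of_le (Metric.mem_ball.mp hy) hρε)
      have h := hFy.sub (hGderiv y hy)
      rw [sub_self] at h
      exact h
    have hdiff : DifferentiableOn ℝ (fun z => F z - G z) (Metric.ball x ρ) :=
      fun z hz => ((hD z hz).differentiableAt).differentiableWithinAt
    have hfd : ∀ z ∈ Metric.ball x ρ, fderivWithin ℝ (fun z => F z - G z) (Metric.ball x ρ) z = 0 := by
      intro z hz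
      have h1 : HasFDerivWithinAt (fun z => F z - G z)
          ((1 : ℝ →L[ℝ] ℝ).smulRight (0:ℝ)) (Metric.ball x ρ) z :=
        (hD z hz).hasFDerivAt.hasFDerivWithinAt
      rw [h1.fderivWithin (Metric.isOpen_ball.uniqueDiffOn z hz)]
      apply ContinuousLinearMap.ext; intro w; simp
    intro y hy
    have h5 := (convex_ball x ρ).is_const_of_fderivWithin_eq_zero hdiff hfd hy
      (Metric.mem_ball_self hρ)
    rw [hGx] at h5
    linarith
  have hGanalytic : AnalyticAt ℝ G x := by
    refine ⟨FormalMultilinearSeries.ofScalars ℝ d, hasFPowerSeriesAt_iff'.mpr ?_⟩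
    filter_upwards [Metric.ball_mem_nhds x hρ] with z hz
    have hcoeff : ∀ n, (FormalMultilinearSeries.ofScalars ℝ d).coeff n = d n := by
      intro n
      have h1 : (FormalMultilinearSeries.ofScalars ℝ d) n (fun _ => (1:ℝ))
          = (1:ℝ) ^ n • (FormalMultilinearSeries.ofScalars ℝ d).coeff n :=
        FormalMultilinearSeries.apply_eq_pow_smul_coeff
      have h2 : (FormalMultilinearSeries.ofScalars ℝ d) n (fun _ => (1:ℝ)) = d n • (1:ℝ) ^ n :=
        FormalMultilinearSeries.ofScalars_apply_eq d (1:ℝ) n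
      rw [h1] at h2
      simpa using h2
    have hsummable : Summable (fun n => g n z) := by
      apply Summable.of_norm_bounded (g := fun n => Nat.rec |F x| (fun k _ => (‖p k‖ * (s:ℝ)^k) * s) n)
      · rw [← summable_nat_add_iff 1]
        exact hsum.mul_right _
      · intro n
        match n with
        | 0 =>
          show ‖g 0 z‖ ≤ |F x|
          simp [hg, hd0]
        | (k+1) =>
          show ‖g (k+1) z‖ ≤ (‖p k‖ * (s:ℝ)^k) * s
          have h1 : ‖g (k+1) z‖ = |d (k+1)| * |z - x|^(k+1) := by
            simp [hg, abs_mul, abs_pow]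
          rw [h1]
          have h2 : |d (k+1)| ≤ ‖p k‖ := by
            rw [hdsucc, abs_div]
            have hk1 : (1:ℝ) ≤ |(k:ℝ)+1| := by
              rw [abs_of_pos (by positivity)]
              linarith [Nat.cast_nonneg (α := ℝ) k]
            calc |c k| / |(k:ℝ)+1| ≤ |c k| / 1 :=
                div_le_div_of_nonneg_left (abs_nonneg _) one_pos hk1
              _ = |c k| := div_one _
              _ ≤ ‖p k‖ := hcle k
          have h3 : |z - x|^(k+1) ≤ (s:ℝ)^k * s := by
            rw [pow_succ]
            exact mul_le_mul (pow_le_pow_left₀ (abs_nonneg _) (habs z hz) k)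
              (habs z hz) (abs_nonneg _) (by positivity)
          calc |d (k+1)| * |z - x|^(k+1) ≤ ‖p k‖ * ((s:ℝ)^k * s) :=
              mul_le_mul h2 h3 (by positivity) (norm_nonneg _)
            _ = (‖p k‖ * (s:ℝ)^k) * s := by ring
    have hfun2 : (fun n : ℕ => (z - x)^n • (FormalMultilinearSeries.ofScalars ℝ d).coeff n)
        = fun n => g n z := by
      funext n
      rw [hcoeff, smul_eq_mul, mul_comm]
    rw [hfun2]
    exact hsummable.hasSum
  exact hGanalytic.congr (by
    filter_upwards [Metric.ball_mem_nhds x hρ] with y hy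
    exact (hEq y hy).symm)


lemma hasDerivAt_primitive_of_continuousOn {f : ℝ → ℝ} {a c x₀ : ℝ}
    (hf : ContinuousOn f (Set.Ioo a c)) (hx₀ : x₀ ∈ Set.Ioo a c) {t : ℝ} (ht : t ∈ Set.Ioo a c) :
    HasDerivAt (fun u => ∫ x in x₀..u, f x) (f t) t := by
  apply intervalIntegral.integral_hasDerivAt_right
  · exact (hf.mono ((Set.ordConnected_Ioo).uIcc_subset hx₀ ht)).intervalIntegrable
  · exact hf.stronglyMeasurableAtFilter isOpen_Ioo t ht
  · exact hf.continuousAt (isOpen_Ioo.mem_nhds ht)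

lemma analyticOnNhd_intervalIntegral {f : ℝ → ℝ} {a c x₀ : ℝ}
    (hf : AnalyticOnNhd ℝ f (Set.Ioo a c)) (hx₀ : x₀ ∈ Set.Ioo a c) :
    AnalyticOnNhd ℝ (fun t => ∫ u in x₀..t, f u) (Set.Ioo a c) := by
  intro x hx
  apply analyticAt_of_hasDerivAt_analytic (hf x hx)
  filter_upwards [isOpen_Ioo.mem_nhds hx] with t ht
  exact hasDerivAt_primitive_of_continuousOn hf.continuousOn hx₀ ht

lemma eq_add_integral_of_deriv {α β : ℝ} {w e : ℝ → ℝ}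
    (hw : ContinuousOn w (Set.Icc α β)) (he : ContinuousOn e (Set.Icc α β))
    (hd : ∀ s ∈ Set.Ioo α β, HasDerivAt w (e s) s) :
    ∀ t ∈ Set.Icc α β, w t = w α + ∫ s in α..t, e s := by
  intro t ht
  have hαt : α ≤ t := ht.1
  have hsub : Set.Icc α t ⊆ Set.Icc α β := Set.Icc_subset_Icc le_rfl ht.2
  have h1 : ∫ s in α..t, e s = w t - w α := by
    apply intervalIntegral.integral_eq_sub_of_hasDeriv_right_of_le hαt (hw.mono hsub)
    · intro s hs
      exact (hd s ⟨hs.1, lt_of_lt_of_le hs.2 ht.2⟩).hasDerivWithinAt.mono (fun y _ => trivial)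
    · have : ContinuousOn e (Set.uIcc α t) := by
        rw [Set.uIcc_of_le hαt]
        exact he.mono hsub
      exact this.intervalIntegrable
  linarith

lemma iteratedDerivWithin_two_eq {v : ℝ → ℝ} {K : Set ℝ} (hU : UniqueDiffOn ℝ K) {τ : ℝ}
    (hτ : τ ∈ K) :
    iteratedDerivWithin 2 v K τ = derivWithin (derivWithin v K) K τ := by
  rw [iteratedDerivWithin_succ]
  exact derivWithin_congr (fun s hs => congrFun iteratedDerivWithin_one s)
    (congrFun iteratedDerivWithin_one τ)

/-- Existence and uniqueness of constant scalar curvature momentum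
profiles: there is exactly one pair `(σ, φ)` (with `φ` twice continuously differentiable on
`[−b,b]`, and unique as a function on `[−b,b]`) solving the cscK equation
`R − (φQ)″/(2Q) = σ` on `[−b,b]` with boundary conditions `φ(−b) = 0`, `φ′(−b) = 2`,
`φ(b) = 0`; moreover this `φ` is real-analytic on a neighbourhood of `[−b,b]`. -/
theorem momentum_cscK_exists_unique (b : ℝ) (hb : 0 < b) (a c : ℝ)
    (ha : a < -b) (hc : b < c) (Q R : ℝ → ℝ)
    (hQ : AnalyticOnNhd ℝ Q (Set.Ioo a c)) (hR : AnalyticOnNhd ℝ R (Set.Ioo a c))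
    (hQpos : ∀ τ ∈ Set.Icc (-b) b, 0 < Q τ) :
    ∃ σ : ℝ, ∃ φ : ℝ → ℝ,
      (ContDiffOn ℝ 2 φ (Set.Icc (-b) b) ∧
        (∀ τ ∈ Set.Icc (-b) b,
          R τ - (1 / (2 * Q τ)) *
            iteratedDerivWithin 2 (fun t => φ t * Q t) (Set.Icc (-b) b) τ = σ) ∧
        φ (-b) = 0 ∧ derivWithin φ (Set.Icc (-b) b) (-b) = 2 ∧ φ b = 0) ∧
      (∀ σ' : ℝ, ∀ φ' : ℝ → ℝ,
        (ContDiffOn ℝ 2 φ' (Set.Icc (-b) b) ∧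
          (∀ τ ∈ Set.Icc (-b) b,
            R τ - (1 / (2 * Q τ)) *
              iteratedDerivWithin 2 (fun t => φ' t * Q t) (Set.Icc (-b) b) τ = σ') ∧
          φ' (-b) = 0 ∧ derivWithin φ' (Set.Icc (-b) b) (-b) = 2 ∧ φ' b = 0) →
        σ' = σ ∧ Set.EqOn φ' φ (Set.Icc (-b) b)) ∧
      AnalyticOnNhd ℝ φ (Set.Icc (-b) b) := by
  have hbb : (-b) < b := by linarith
  set K := Set.Icc (-b) b with hKdef
  set I := Set.Ioo a c with hIdef
  have hKI : K ⊆ I := fun t ht => ⟨lt_of_lt_of_le ha ht.1, lt_of_le_of_lt ht.2 hc⟩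
  have hbK : (-b) ∈ K := Set.left_mem_Icc.mpr hbb.le
  have hbK' : b ∈ K := Set.right_mem_Icc.mpr hbb.le
  have hbmem : (-b) ∈ I := hKI hbK
  have hUD : UniqueDiffOn ℝ K := uniqueDiffOn_Icc hbb
  have hQC : ∀ x ∈ K, Q x ≠ 0 := fun x hx => ne_of_gt (hQpos x hx)
  set g : ℝ → ℝ := fun t => 2 * Q t with hgdef
  set h : ℝ → ℝ := fun t => 2 * Q t * R t with hhdef
  have hg_an : AnalyticOnNhd ℝ g I := analyticOnNhd_const.mul hQ
  have hh_an : AnalyticOnNhd ℝ h I := hg_an.mul hR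
  set G1 : ℝ → ℝ := fun t => ∫ u in (-b)..t, g u with hG1def
  set H1 : ℝ → ℝ := fun t => ∫ u in (-b)..t, h u with hH1def
  have hG1_an : AnalyticOnNhd ℝ G1 I := analyticOnNhd_intervalIntegral hg_an hbmem
  have hH1_an : AnalyticOnNhd ℝ H1 I := analyticOnNhd_intervalIntegral hh_an hbmem
  set G2 : ℝ → ℝ := fun t => ∫ u in (-b)..t, G1 u with hG2def
  set H2 : ℝ → ℝ := fun t => ∫ u in (-b)..t, H1 u with hH2def
  have hG2_an : AnalyticOnNhd ℝ G2 I := analyticOnNhd_intervalIntegral hG1_an hbmem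
  have hH2_an : AnalyticOnNhd ℝ H2 I := analyticOnNhd_intervalIntegral hH1_an hbmem
  have hG1d : ∀ t ∈ I, HasDerivAt G1 (g t) t :=
    fun t ht => hasDerivAt_primitive_of_continuousOn hg_an.continuousOn hbmem ht
  have hH1d : ∀ t ∈ I, HasDerivAt H1 (h t) t :=
    fun t ht => hasDerivAt_primitive_of_continuousOn hh_an.continuousOn hbmem ht
  have hG2d : ∀ t ∈ I, HasDerivAt G2 (G1 t) t :=
    fun t ht => hasDerivAt_primitive_of_continuousOn hG1_an.continuousOn hbmem ht
  have hH2d : ∀ t ∈ I, HasDerivAt H2 (H1 t) t :=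
    fun t ht => hasDerivAt_primitive_of_continuousOn hH1_an.continuousOn hbmem ht
  have hG1b : G1 (-b) = 0 := intervalIntegral.integral_same
  have hH1b : H1 (-b) = 0 := intervalIntegral.integral_same
  have hG2b : G2 (-b) = 0 := intervalIntegral.integral_same
  have hH2b : H2 (-b) = 0 := intervalIntegral.integral_same
  have hG1pos : ∀ s ∈ Set.Ioo (-b) b, 0 < G1 s := by
    intro s hs
    have huI : Set.uIcc (-b) s ⊆ I :=
      (Set.ordConnected_Ioo).uIcc_subset hbmem (hKI (Set.Ioo_subset_Icc_self hs))
    apply intervalIntegral.intervalIntegral_pos_of_pos_on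
    · exact (hg_an.continuousOn.mono huI).intervalIntegrable
    · intro x hx
      have hxK : x ∈ K := ⟨hx.1.le, hx.2.le.trans hs.2.le⟩
      have := hQpos x hxK
      simp only [hgdef]; linarith
    · exact hs.1
  have hG2bpos : 0 < G2 b := by
    have huI : Set.uIcc (-b) b ⊆ I := (Set.ordConnected_Ioo).uIcc_subset hbmem (hKI hbK')
    apply intervalIntegral.intervalIntegral_pos_of_pos_on
    · exact (hG1_an.continuousOn.mono huI).intervalIntegrable
    · exact hG1pos
    · exact hbb
  set σ : ℝ := (4 * b * Q (-b) + H2 b) / G2 b with hσdef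
  set ψ : ℝ → ℝ := fun t => 2 * Q (-b) * (t + b) + H2 t - σ * G2 t with hψdef
  set ψ1 : ℝ → ℝ := fun t => 2 * Q (-b) + H1 t - σ * G1 t with hψ1def
  have hψd : ∀ t ∈ I, HasDerivAt ψ (ψ1 t) t := by
    intro t ht
    have h1 : HasDerivAt (fun t : ℝ => 2 * Q (-b) * (t + b)) (2 * Q (-b)) t := by
      simpa using (((hasDerivAt_id t).add_const b).const_mul (2 * Q (-b)))
    have h2 := (h1.add (hH2d t ht)).sub ((hG2d t ht).const_mul σ)
    convert h2 using 1
    rfl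
    rfl
    funext u
    simp only [Pi.add_apply, Pi.sub_apply, hψdef]
  have hψ1d : ∀ t ∈ I, HasDerivAt ψ1 (h t - σ * g t) t := by
    intro t ht
    have h1 : HasDerivAt (fun _ : ℝ => 2 * Q (-b)) 0 t := hasDerivAt_const t _
    have h2 := (h1.add (hH1d t ht)).sub ((hG1d t ht).const_mul σ)
    convert h2 using 1
    · rfl
    · rfl
    · funext u
      simp only [Pi.add_apply, Pi.sub_apply, hψ1def]
    · ring
  have hψ_an : AnalyticOnNhd ℝ ψ I :=
    ((analyticOnNhd_const.mul (analyticOnNhd_id.add analyticOnNhd_const)).add hH2_an).sub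
      (analyticOnNhd_const.mul hG2_an)
  set φ : ℝ → ℝ := fun t => ψ t / Q t with hφdef
  have hφ_an : AnalyticOnNhd ℝ φ K :=
    fun x hx => ((hψ_an x (hKI hx)).div (hQ x (hKI hx)) (hQC x hx))
  have hφC2 : ContDiffOn ℝ 2 φ K := fun x hx => ((hφ_an x hx).contDiffAt).contDiffWithinAt
  have hψb0 : ψ (-b) = 0 := by
    show 2 * Q (-b) * ((-b) + b) + H2 (-b) - σ * G2 (-b) = 0
    rw [hH2b, hG2b]; ring
  have hψ1b : ψ1 (-b) = 2 * Q (-b) := by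
    show 2 * Q (-b) + H1 (-b) - σ * G1 (-b) = 2 * Q (-b)
    rw [hH1b, hG1b]; ring
  have hψbb : ψ b = 0 := by
    show 2 * Q (-b) * (b + b) + H2 b - σ * G2 b = 0
    rw [hσdef, div_mul_cancel₀ _ (ne_of_gt hG2bpos)]
    ring
  have hψw1 : Set.EqOn (derivWithin ψ K) ψ1 K :=
    fun s hs => (hψd s (hKI hs)).hasDerivWithinAt.derivWithin (hUD s hs)
  have hψiter : ∀ τ ∈ K, iteratedDerivWithin 2 ψ K τ = h τ - σ * g τ := by
    intro τ hτ
    rw [iteratedDerivWithin_two_eq hUD hτ, derivWithin_congr hψw1 (hψw1 hτ)]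
    exact (hψ1d τ (hKI hτ)).hasDerivWithinAt.derivWithin (hUD τ hτ)
  have hφQψ : Set.EqOn (fun t => φ t * Q t) ψ K := by
    intro t ht
    simp only [hφdef]
    exact div_mul_cancel₀ _ (hQC t ht)
  have hQK : ContDiffOn ℝ 2 Q K := fun x hx => ((hQ x (hKI hx)).contDiffAt).contDiffWithinAt
  refine ⟨σ, φ, ⟨hφC2, ?_, ?_, ?_, ?_⟩, ?_, hφ_an⟩
  · intro τ hτ
    rw [iteratedDerivWithin_congr hφQψ hτ, hψiter τ hτ]
    have hQτ := hQpos τ hτ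
    simp only [hhdef, hgdef]
    field_simp
    ring
  · show ψ (-b) / Q (-b) = 0
    rw [hψb0, zero_div]
  · have hQd : HasDerivAt Q (deriv Q (-b)) (-b) := ((hQ (-b) hbmem).differentiableAt).hasDerivAt
    have hφd : HasDerivAt φ ((ψ1 (-b) * Q (-b) - ψ (-b) * deriv Q (-b)) / (Q (-b))^2) (-b) :=
      (hψd (-b) hbmem).div hQd (hQC (-b) hbK)
    have h2 : (ψ1 (-b) * Q (-b) - ψ (-b) * deriv Q (-b)) / (Q (-b))^2 = 2 := by
      rw [hψb0, hψ1b]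
      have hQb := hQpos (-b) hbK
      field_simp
      ring
    rw [h2] at hφd
    exact hφd.hasDerivWithinAt.derivWithin (hUD (-b) hbK)
  · show ψ b / Q b = 0
    rw [hψbb, zero_div]
  · rintro σ' φ' ⟨hC2', heq', h0', hd', hb'⟩
    set v : ℝ → ℝ := fun t => φ' t * Q t with hvdef
    have hvC2 : ContDiffOn ℝ 2 v K := hC2'.mul hQK
    set v1 : ℝ → ℝ := derivWithin v K with hv1def
    have he' : ∀ τ ∈ K, iteratedDerivWithin 2 v K τ = h τ - σ' * g τ := by
      intro τ hτ
      have h1 := heq' τ hτ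
      have hQτ := hQpos τ hτ
      have hne : 2 * Q τ ≠ 0 := by positivity
      simp only [hhdef, hgdef]
      field_simp at h1
      nlinarith [h1]
    have hv1cont : ContinuousOn v1 K := hvC2.continuousOn_derivWithin hUD (by norm_num)
    have hecont : ContinuousOn (fun s => h s - σ' * g s) K :=
      (hh_an.continuousOn.mono hKI).sub (continuousOn_const.mul (hg_an.continuousOn.mono hKI))
    have hv1d : ∀ s ∈ Set.Ioo (-b) b, HasDerivAt v1 (h s - σ' * g s) s := by
      intro s hs
      have hsK : s ∈ K := Set.Ioo_subset_Icc_self hs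
      have hmem : K ∈ nhds s := Icc_mem_nhds hs.1 hs.2
      have hv1C1 : ContDiffOn ℝ 1 v1 K := hvC2.derivWithin hUD (by norm_num)
      have hdiff : DifferentiableWithinAt ℝ v1 K s :=
        (hv1C1.differentiableOn one_ne_zero) s hsK
      have hda : DifferentiableAt ℝ v1 s := hdiff.differentiableAt hmem
      have h1 : derivWithin v1 K s = deriv v1 s := derivWithin_of_mem_nhds hmem
      have h2 : derivWithin v1 K s = h s - σ' * g s := by
        rw [hv1def, ← iteratedDerivWithin_two_eq hUD hsK]
        exact he' s hsK
      have h3 := hda.hasDerivAt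
      rwa [← h1, h2] at h3
    have hv1val : ∀ t ∈ K, v1 t = v1 (-b) + ∫ s in (-b)..t, (h s - σ' * g s) :=
      eq_add_integral_of_deriv hv1cont hecont hv1d
    have hvd : ∀ s ∈ Set.Ioo (-b) b, HasDerivAt v (v1 s) s := by
      intro s hs
      have hsK : s ∈ K := Set.Ioo_subset_Icc_self hs
      have hmem : K ∈ nhds s := Icc_mem_nhds hs.1 hs.2
      have hda : DifferentiableAt ℝ v s :=
        ((hvC2.differentiableOn (by norm_num)) s hsK).differentiableAt hmem
      have h1 : derivWithin v K s = deriv v s := derivWithin_of_mem_nhds hmem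
      have h3 := hda.hasDerivAt
      rw [hv1def]
      rwa [← h1] at h3
    have hvval : ∀ t ∈ K, v t = v (-b) + ∫ s in (-b)..t, v1 s :=
      eq_add_integral_of_deriv hvC2.continuousOn hv1cont hvd
    have hv0 : v (-b) = 0 := by
      show φ' (-b) * Q (-b) = 0
      rw [h0', zero_mul]
    have hv10 : v1 (-b) = 2 * Q (-b) := by
      rw [hv1def, derivWithin_fun_mul
        ((hC2'.differentiableOn (by norm_num)) _ hbK) ((hQK.differentiableOn (by norm_num)) _ hbK)]
      rw [hd', h0']
      ring
    have hinner : ∀ s ∈ K, (∫ u in (-b)..s, (h u - σ' * g u)) = H1 s - σ' * G1 s := by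
      intro s hsK
      have huI : Set.uIcc (-b) s ⊆ I := (Set.ordConnected_Ioo).uIcc_subset hbmem (hKI hsK)
      rw [intervalIntegral.integral_sub ((hh_an.continuousOn.mono huI).intervalIntegrable)
        (((hg_an.continuousOn.mono huI).intervalIntegrable).const_mul σ'),
        intervalIntegral.integral_const_mul]
    have hφ'val : ∀ t ∈ K, v t = 2 * Q (-b) * (t + b) + H2 t - σ' * G2 t := by
      intro t ht
      rw [hvval t ht, hv0]
      have huK : Set.uIcc (-b) t ⊆ K := (Set.ordConnected_Icc).uIcc_subset hbK ht
      have huI : Set.uIcc (-b) t ⊆ I := fun x hx => hKI (huK hx)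
      have hcongr : Set.EqOn v1 (fun s => 2 * Q (-b) + (H1 s - σ' * G1 s)) (Set.uIcc (-b) t) := by
        intro s hs
        rw [hv1val s (huK hs), hv10, hinner s (huK hs)]
      rw [intervalIntegral.integral_congr hcongr]
      have e1 : (∫ s in (-b)..t, (2 * Q (-b) + (H1 s - σ' * G1 s)))
          = (t + b) * (2 * Q (-b)) + ((∫ s in (-b)..t, H1 s) - σ' * ∫ s in (-b)..t, G1 s) := by
        rw [intervalIntegral.integral_add intervalIntegrable_const
          (((hH1_an.continuousOn.mono huI).intervalIntegrable).sub
            (((hG1_an.continuousOn.mono huI).intervalIntegrable).const_mul σ')),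
          intervalIntegral.integral_sub ((hH1_an.continuousOn.mono huI).intervalIntegrable)
            (((hG1_an.continuousOn.mono huI).intervalIntegrable).const_mul σ')]
        simp only [intervalIntegral.integral_const_mul, intervalIntegral.integral_const,
          smul_eq_mul]
        ring
      rw [e1]
      ring
    have hσ'σ : σ' = σ := by
      have h1 := hφ'val b hbK'
      have h2 : v b = 0 := by
        show φ' b * Q b = 0
        rw [hb', zero_mul]
      rw [h2] at h1
      rw [hσdef]
      have hG2bne : G2 b ≠ 0 := ne_of_gt hG2bpos
      field_simp
      nlinarith [h1]
    refine ⟨hσ'σ, fun t ht => ?_⟩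
    have h1 := hφ'val t ht
    rw [hσ'σ] at h1
    have hQt : Q t ≠ 0 := hQC t ht
    have h2 : φ' t = v t / Q t := by
      show φ' t = φ' t * Q t / Q t
      rw [mul_div_cancel_right₀ _ hQt]
    rw [h2, h1]
end
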